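/- Let α ≥ 0, β ≥ 0 be fixed. Then the limit as S → ∞ of min( log₂(1 + (√S + √(S^α))²), log₂(1 + S^β + S) ) / log₂(1 + S) equals max(1, min(α, β)). -/

import Mathlib

open Filter Real

lemma aux_affine_17 (a b c : ℝ) :
    Tendsto (fun t : ℝ => (a * t + b) / (t + c)) atTop (nhds a) := by
  have h : Tendsto (fun t : ℝ => (a + b / t) / (1 + c / t)) atTop (nhds a) := by
    have hb : Tendsto (fun t : ℝ => b / t) atTop (nhds 0) :=
      tendsto_const_nhds.div_atTop tendsto_id
    have hc : Tendsto (fun t : ℝ => c / t) atTop (nhds 0) :=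
      tendsto_const_nhds.div_atTop tendsto_id
    have := Tendsto.div ((tendsto_const_nhds (x := a)).add hb)
      ((tendsto_const_nhds (x := (1:ℝ))).add hc) (by norm_num)
    rw [show (a + 0) / (1 + 0) = a by norm_num] at this
    exact this
  refine h.congr' ?_
  filter_upwards [eventually_gt_atTop 0, eventually_gt_atTop (-c)] with t ht htc
  have ht' : t ≠ 0 := ne_of_gt ht
  have htc' : t + c ≠ 0 := by linarith
  field_simp

lemma aux_ratio_17 (M c : ℝ) (hM : 0 ≤ M) (f : ℝ → ℝ)
    (hf : ∀ᶠ S in atTop, M * Real.log S ≤ f S ∧ f S ≤ M * Real.log S + c) :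
    Tendsto (fun S => f S / Real.log (1 + S)) atTop (nhds M) := by
  have hlog := Real.tendsto_log_atTop
  have hlo : Tendsto (fun S : ℝ => (M * Real.log S) / (Real.log S + Real.log 2))
      atTop (nhds M) := by
    have := (aux_affine_17 M 0 (Real.log 2)).comp hlog
    simpa [Function.comp_def] using this
  have hhi : Tendsto (fun S : ℝ => (M * Real.log S + c) / Real.log S)
      atTop (nhds M) := by
    have := (aux_affine_17 M c 0).comp hlog
    simpa [Function.comp_def] using this
  refine tendsto_of_tendsto_of_tendsto_of_le_of_le' hlo hhi ?_ ?_
  · filter_upwards [hf, eventually_ge_atTop 2] with S hfS hS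
    have hS1 : (1:ℝ) < S := by linarith
    have hlS : 0 < Real.log S := Real.log_pos hS1
    have hlS1 : 0 < Real.log (1 + S) := Real.log_pos (by linarith)
    have hle : Real.log (1 + S) ≤ Real.log S + Real.log 2 := by
      rw [← Real.log_mul (by positivity) (by norm_num)]
      exact Real.log_le_log (by linarith) (by nlinarith)
    calc M * Real.log S / (Real.log S + Real.log 2)
        ≤ M * Real.log S / Real.log (1 + S) :=
          div_le_div_of_nonneg_left (mul_nonneg hM hlS.le) hlS1 hle
      _ ≤ f S / Real.log (1 + S) :=
          div_le_div_of_nonneg_right hfS.1 hlS1.le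
  · filter_upwards [hf, eventually_ge_atTop 2] with S hfS hS
    have hS1 : (1:ℝ) < S := by linarith
    have hlS : 0 < Real.log S := Real.log_pos hS1
    have hlS1 : 0 < Real.log (1 + S) := Real.log_pos (by linarith)
    have hle : Real.log S ≤ Real.log (1 + S) :=
      Real.log_le_log (by linarith) (by linarith)
    have hc0 : 0 ≤ c := by linarith [hfS.1, hfS.2]
    have hnum : 0 ≤ M * Real.log S + c := by
      have := mul_nonneg hM hlS.le; linarith
    calc f S / Real.log (1 + S)
        ≤ (M * Real.log S + c) / Real.log (1 + S) :=
          div_le_div_of_nonneg_right hfS.2 hlS1.le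
      _ ≤ (M * Real.log S + c) / Real.log S :=
          div_le_div_of_nonneg_left hnum hlS hle

open Filter in
theorem stmt_17 (α β : ℝ) (hα : 0 ≤ α) (hβ : 0 ≤ β) :
    Tendsto (fun S : ℝ =>
        min (Real.logb 2 (1 + (Real.sqrt S + Real.sqrt (S ^ α)) ^ 2))
            (Real.logb 2 (1 + S ^ β + S)) / Real.logb 2 (1 + S))
      atTop (nhds (max 1 (min α β))) := by
  have hM : (0:ℝ) ≤ max 1 α := le_trans zero_le_one (le_max_left _ _)
  have hN : (0:ℝ) ≤ max 1 β := le_trans zero_le_one (le_max_left _ _)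
  have h1 : Tendsto (fun S : ℝ =>
      Real.log (1 + (Real.sqrt S + Real.sqrt (S ^ α)) ^ 2) / Real.log (1 + S))
      atTop (nhds (max 1 α)) := by
    apply aux_ratio_17 (max 1 α) (Real.log 5) hM
    filter_upwards [eventually_ge_atTop 2] with S hS
    have hS0 : (0:ℝ) < S := by linarith
    have hS1 : (1:ℝ) ≤ S := by linarith
    have hSa : S ^ α ≤ S ^ max 1 α :=
      Real.rpow_le_rpow_of_exponent_le hS1 (le_max_right _ _)
    have hS1m : S ≤ S ^ max 1 α := by
      nth_rewrite 1 [← Real.rpow_one S]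
      exact Real.rpow_le_rpow_of_exponent_le hS1 (le_max_left _ _)
    have hone : (1:ℝ) ≤ S ^ max 1 α := Real.one_le_rpow hS1 hM
    have hlow : S ^ max 1 α ≤ 1 + (Real.sqrt S + Real.sqrt (S ^ α)) ^ 2 := by
      rcases max_cases 1 α with ⟨h, _⟩ | ⟨h, _⟩
      · rw [h, Real.rpow_one]
        have : S = (Real.sqrt S) ^ 2 := (Real.sq_sqrt hS0.le).symm
        nlinarith [Real.sqrt_nonneg S, Real.sqrt_nonneg (S ^ α)]
      · rw [h]
        have : S ^ α = (Real.sqrt (S ^ α)) ^ 2 :=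
          (Real.sq_sqrt (Real.rpow_nonneg hS0.le α)).symm
        nlinarith [Real.sqrt_nonneg S, Real.sqrt_nonneg (S ^ α)]
    have hhigh : 1 + (Real.sqrt S + Real.sqrt (S ^ α)) ^ 2 ≤ 5 * S ^ max 1 α := by
      have h1' : Real.sqrt S ≤ Real.sqrt (S ^ max 1 α) := Real.sqrt_le_sqrt hS1m
      have h2' : Real.sqrt (S ^ α) ≤ Real.sqrt (S ^ max 1 α) := Real.sqrt_le_sqrt hSa
      have h3' : (Real.sqrt (S ^ max 1 α)) ^ 2 = S ^ max 1 α :=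
        Real.sq_sqrt (Real.rpow_nonneg hS0.le _)
      nlinarith [Real.sqrt_nonneg S, Real.sqrt_nonneg (S ^ α),
        Real.sqrt_nonneg (S ^ max 1 α)]
    have hApos : (0:ℝ) < S ^ max 1 α := Real.rpow_pos_of_pos hS0 _
    constructor
    · rw [← Real.log_rpow hS0]
      exact Real.log_le_log hApos hlow
    · calc Real.log (1 + (Real.sqrt S + Real.sqrt (S ^ α)) ^ 2)
          ≤ Real.log (5 * S ^ max 1 α) := Real.log_le_log (by positivity) hhigh
        _ = max 1 α * Real.log S + Real.log 5 := by
            rw [Real.log_mul (by norm_num) (ne_of_gt hApos), Real.log_rpow hS0]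
            ring
  have h2 : Tendsto (fun S : ℝ =>
      Real.log (1 + S ^ β + S) / Real.log (1 + S))
      atTop (nhds (max 1 β)) := by
    apply aux_ratio_17 (max 1 β) (Real.log 3) hN
    filter_upwards [eventually_ge_atTop 2] with S hS
    have hS0 : (0:ℝ) < S := by linarith
    have hS1 : (1:ℝ) ≤ S := by linarith
    have hSb : S ^ β ≤ S ^ max 1 β :=
      Real.rpow_le_rpow_of_exponent_le hS1 (le_max_right _ _)
    have hS1m : S ≤ S ^ max 1 β := by
      nth_rewrite 1 [← Real.rpow_one S]
      exact Real.rpow_le_rpow_of_exponent_le hS1 (le_max_left _ _)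
    have hone : (1:ℝ) ≤ S ^ max 1 β := Real.one_le_rpow hS1 hN
    have hb0 : (0:ℝ) ≤ S ^ β := Real.rpow_nonneg hS0.le β
    have hlow : S ^ max 1 β ≤ 1 + S ^ β + S := by
      rcases max_cases 1 β with ⟨h, _⟩ | ⟨h, _⟩
      · rw [h, Real.rpow_one]; linarith
      · rw [h]; linarith
    have hhigh : 1 + S ^ β + S ≤ 3 * S ^ max 1 β := by linarith
    have hApos : (0:ℝ) < S ^ max 1 β := Real.rpow_pos_of_pos hS0 _
    constructor
    · rw [← Real.log_rpow hS0]
      exact Real.log_le_log hApos hlow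
    · calc Real.log (1 + S ^ β + S)
          ≤ Real.log (3 * S ^ max 1 β) := Real.log_le_log (by linarith) hhigh
        _ = max 1 β * Real.log S + Real.log 3 := by
            rw [Real.log_mul (by norm_num) (ne_of_gt hApos), Real.log_rpow hS0]
            ring
  have hmin := h1.min h2
  rw [show max 1 (min α β) = min (max 1 α) (max 1 β) from max_min_distrib_left 1 α β]
  refine hmin.congr' ?_
  filter_upwards [eventually_ge_atTop 2] with S hS
  have hS1 : (1:ℝ) < S := by linarith
  have hl2 : (0:ℝ) < Real.log 2 := Real.log_pos one_lt_two
  have hlc : (0:ℝ) < Real.log (1 + S) := Real.log_pos (by linarith)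
  simp only [Real.logb]
  rw [min_div_div_right hl2.le, min_div_div_right hlc.le]
  field_simp
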